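/- Let K be a non-Archimedean field, V a K-vector space of finite dimension d, and let N, N' be two non-Archimedean norms on V that are both diagonalizable in a common basis (s₁,…,s_d) of V. Assume the basis is ordered so that the sequence log N'(sᵢ) − log N(sᵢ) is non-increasing in i. Then for every 1 ≤ i ≤ d, the i-th relative spectral value satisfies λᵢ(N,N') = log N'(sᵢ) − log N(sᵢ). -/

import Mathlib

open scoped BigOperators

/-- A non-Archimedean norm on a `K`-vector space `V`. -/
def IsNAnorm (K : Type*) {V : Type*} [NormedField K] [AddCommGroup V] [Module K V]
    (N : V → ℝ) : Prop :=
  (∀ v, 0 ≤ N v) ∧ (∀ v, N v = 0 ↔ v = 0) ∧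
  (∀ (a : K) (v : V), N (a • v) = ‖a‖ * N v) ∧
  (∀ v w : V, N (v + w) ≤ max (N v) (N w))

/-- The sup-distance `d_∞` between two norms on `V`. -/
noncomputable def dInfty {V : Type*} [AddCommGroup V] (N N' : V → ℝ) : ℝ :=
  sSup {r | ∃ v : V, v ≠ 0 ∧ r = |Real.log (N' v) - Real.log (N v)|}

/-- The `i`-th relative spectral value `λᵢ(N, N')`:
the supremum, over subspaces `W ⊆ V` with `dim W ≥ i`, of
`inf_{w ∈ W ∖ {0}} (log N'(w) − log N(w))`. -/
noncomputable def specVal (K : Type*) {V : Type*} [Field K] [AddCommGroup V] [Module K V]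
    (N N' : V → ℝ) (i : ℕ) : ℝ :=
  sSup {r | ∃ W : Submodule K V, i ≤ Module.finrank K W ∧
    r = sInf {s | ∃ w ∈ W, w ≠ (0 : V) ∧ s = Real.log (N' w) - Real.log (N w)}}

/-- The relative volume `vol(N, N') = (1/d)·Σ_{i=1}^d λᵢ(N, N')`, where `d = dim V`. -/
noncomputable def relVol (K : Type*) (V : Type*) [Field K] [AddCommGroup V] [Module K V]
    (N N' : V → ℝ) : ℝ :=
  (Module.finrank K V : ℝ)⁻¹ *
    ∑ i ∈ Finset.range (Module.finrank K V), specVal K N N' (i + 1)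

/-- For two norms diagonalizable in a common basis `(s₁, …, s_d)` ordered so that
`log N'(sᵢ) − log N(sᵢ)` is non-increasing, the `i`-th relative spectral value equals
`log N'(sᵢ) − log N(sᵢ)`. -/
theorem specVal_of_jointly_diagonalizable
    (K V : Type*) [NormedField K] [IsUltrametricDist K] [CompleteSpace K]
    [AddCommGroup V] [Module K V] [FiniteDimensional K V]
    (d : ℕ) (hdim : Module.finrank K V = d)
    (N N' : V → ℝ) (hN : IsNAnorm K N) (hN' : IsNAnorm K N')
    (b : Module.Basis (Fin d) K V)
    (hNdiag : ∀ a : Fin d → K, N (∑ i, a i • b i) = ⨆ i, ‖a i‖ * N (b i))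
    (hN'diag : ∀ a : Fin d → K, N' (∑ i, a i • b i) = ⨆ i, ‖a i‖ * N' (b i))
    (hord : ∀ i j : Fin d, i ≤ j →
      Real.log (N' (b j)) - Real.log (N (b j)) ≤ Real.log (N' (b i)) - Real.log (N (b i))) :
    ∀ i : Fin d, specVal K N N' (i.1 + 1) = Real.log (N' (b i)) - Real.log (N (b i)) := by
  unfold specVal
  intro i
  have hd : 0 < d := i.pos
  have hNpos : ∀ v : V, v ≠ 0 → 0 < N v := fun v hv =>
    lt_of_le_of_ne (hN.1 v) (fun h => hv ((hN.2.1 v).1 h.symm))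
  have hN'pos : ∀ v : V, v ≠ 0 → 0 < N' v := fun v hv =>
    lt_of_le_of_ne (hN'.1 v) (fun h => hv ((hN'.2.1 v).1 h.symm))
  set r : Fin d → ℝ := fun j => Real.log (N' (b j)) - Real.log (N (b j)) with hr
  -- rewriting norms via repr
  have hNw : ∀ w : V, N w = ⨆ j, ‖b.repr w j‖ * N (b j) := by
    intro w
    have := hNdiag (fun j => b.repr w j)
    rwa [b.sum_repr w] at this
  have hN'w : ∀ w : V, N' w = ⨆ j, ‖b.repr w j‖ * N' (b j) := by
    intro w
    have := hN'diag (fun j => b.repr w j)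
    rwa [b.sum_repr w] at this
  have : Nonempty (Fin d) := ⟨i⟩
  have hmax : ∀ f : Fin d → ℝ, ∃ j, (⨆ k, f k) = f j ∧ ∀ k, f k ≤ f j := by
    intro f
    obtain ⟨j, -, hj⟩ := Finset.exists_max_image Finset.univ f ⟨i, Finset.mem_univ i⟩
    refine ⟨j, le_antisymm (ciSup_le fun k => hj k (Finset.mem_univ k))
      (le_ciSup (Set.finite_range f).bddAbove j), fun k => hj k (Finset.mem_univ k)⟩
  -- lower bound lemma
  have hlow : ∀ w : V, w ≠ 0 → ∃ j, b.repr w j ≠ 0 ∧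
      r j ≤ Real.log (N' w) - Real.log (N w) := by
    intro w hw
    obtain ⟨j, hj1, hj2⟩ := hmax (fun k => ‖b.repr w k‖ * N (b k))
    have hNwj : N w = ‖b.repr w j‖ * N (b j) := by rw [hNw w, hj1]
    have hpos : 0 < N w := hNpos w hw
    have haj : ‖b.repr w j‖ ≠ 0 := by
      intro h; rw [hNwj, h, zero_mul] at hpos; exact lt_irrefl 0 hpos
    have haj' : b.repr w j ≠ 0 := fun h => haj (by simp [h])
    have hbpos : 0 < N (b j) := hNpos _ (b.ne_zero j)
    have hbpos' : 0 < N' (b j) := hN'pos _ (b.ne_zero j)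
    have hNle : ‖b.repr w j‖ * N' (b j) ≤ N' w := by
      rw [hN'w w]
      exact le_ciSup (f := fun k => ‖b.repr w k‖ * N' (b k)) (Set.finite_range _).bddAbove j
    have h1 : Real.log (‖b.repr w j‖ * N' (b j)) ≤ Real.log (N' w) :=
      Real.log_le_log (mul_pos (lt_of_le_of_ne (norm_nonneg _) (Ne.symm haj)) hbpos') hNle
    rw [Real.log_mul haj (ne_of_gt hbpos')] at h1
    have h2 : Real.log (N w) = Real.log ‖b.repr w j‖ + Real.log (N (b j)) := by
      rw [hNwj, Real.log_mul haj (ne_of_gt hbpos)]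
    exact ⟨j, haj', by simp only [hr]; linarith⟩
  -- upper bound lemma
  have hhigh : ∀ w : V, w ≠ 0 → ∃ k, b.repr w k ≠ 0 ∧
      Real.log (N' w) - Real.log (N w) ≤ r k := by
    intro w hw
    obtain ⟨k, hk1, hk2⟩ := hmax (fun j => ‖b.repr w j‖ * N' (b j))
    have hN'wk : N' w = ‖b.repr w k‖ * N' (b k) := by rw [hN'w w, hk1]
    have hpos : 0 < N' w := hN'pos w hw
    have hak : ‖b.repr w k‖ ≠ 0 := by
      intro h; rw [hN'wk, h, zero_mul] at hpos; exact lt_irrefl 0 hpos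
    have hak' : b.repr w k ≠ 0 := fun h => hak (by simp [h])
    have hbpos : 0 < N (b k) := hNpos _ (b.ne_zero k)
    have hbpos' : 0 < N' (b k) := hN'pos _ (b.ne_zero k)
    have hNle : ‖b.repr w k‖ * N (b k) ≤ N w := by
      rw [hNw w]
      exact le_ciSup (f := fun j => ‖b.repr w j‖ * N (b j)) (Set.finite_range _).bddAbove k
    have h1 : Real.log (‖b.repr w k‖ * N (b k)) ≤ Real.log (N w) :=
      Real.log_le_log (mul_pos (lt_of_le_of_ne (norm_nonneg _) (Ne.symm hak)) hbpos) hNle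
    rw [Real.log_mul hak (ne_of_gt hbpos)] at h1
    have h2 : Real.log (N' w) = Real.log ‖b.repr w k‖ + Real.log (N' (b k)) := by
      rw [hN'wk, Real.log_mul hak (ne_of_gt hbpos')]
    exact ⟨k, hak', by simp only [hr]; linarith⟩
  -- global lower bound
  set jmax : Fin d := ⟨d - 1, by omega⟩ with hjmax
  have hglb : ∀ s ∈ {s | ∃ w : V, w ≠ (0:V) ∧ s = Real.log (N' w) - Real.log (N w)},
      r jmax ≤ s := by
    rintro s ⟨w, hw, rfl⟩
    obtain ⟨j, -, hj⟩ := hlow w hw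
    have : r jmax ≤ r j := hord j jmax (by simp [hjmax, Fin.le_def]; omega)
    linarith
  have hbdd : ∀ W : Submodule K V, BddBelow
      {s | ∃ w ∈ W, w ≠ (0:V) ∧ s = Real.log (N' w) - Real.log (N w)} := by
    intro W
    exact ⟨r jmax, fun s ⟨w, _, hw, hs⟩ => hglb s ⟨w, hw, hs⟩⟩
  -- part 1 : r i is in the set
  have hmem : ∃ W : Submodule K V, i.1 + 1 ≤ Module.finrank K W ∧
      r i = sInf {s | ∃ w ∈ W, w ≠ (0 : V) ∧ s = Real.log (N' w) - Real.log (N w)} := by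
    refine ⟨Submodule.span K (b '' Set.Iic i), ?_, ?_⟩
    · have hli : LinearIndependent K (fun j : Set.Iic i => b j) :=
        b.linearIndependent.comp _ Subtype.val_injective
      have hsp : Set.range (fun j : Set.Iic i => b j) = b '' Set.Iic i := by
        ext x; simp [Set.mem_image]
      rw [← hsp, finrank_span_eq_card hli, Fintype.card_Iic, Fin.card_Iic]
    · have hbi : (b i : V) ∈ Submodule.span K (b '' Set.Iic i) :=
        Submodule.subset_span ⟨i, le_refl i, rfl⟩
      refine le_antisymm ?_ (csInf_le (hbdd _) ⟨b i, hbi, b.ne_zero i, rfl⟩)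
      refine le_csInf ⟨r i, b i, hbi, b.ne_zero i, rfl⟩ ?_
      rintro s ⟨w, hwW, hw, rfl⟩
      obtain ⟨j, hj0, hj⟩ := hlow w hw
      have hsupp : (↑(b.repr w).support : Set (Fin d)) ⊆ Set.Iic i :=
        b.mem_span_image.1 hwW
      have hji : j ≤ i := hsupp (Finsupp.mem_support_iff.2 hj0)
      have := hord j i hji
      simp only [hr] at hj ⊢
      linarith
  -- part 2 : upper bound
  have hub : ∀ t ∈ {t | ∃ W : Submodule K V, i.1 + 1 ≤ Module.finrank K W ∧
      t = sInf {s | ∃ w ∈ W, w ≠ (0 : V) ∧ s = Real.log (N' w) - Real.log (N w)}},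
      t ≤ r i := by
    rintro t ⟨W, hW, rfl⟩
    set W₁ : Submodule K V := Submodule.span K (b '' Set.Ici i) with hW₁
    have hfr1 : Module.finrank K W₁ = d - i.1 := by
      have hli : LinearIndependent K (fun j : Set.Ici i => b j) :=
        b.linearIndependent.comp _ Subtype.val_injective
      have hsp : Set.range (fun j : Set.Ici i => b j) = b '' Set.Ici i := by
        ext x; simp [Set.mem_image]
      rw [hW₁, ← hsp, finrank_span_eq_card hli, Fintype.card_Ici, Fin.card_Ici]
    have hsum := Submodule.finrank_sup_add_finrank_inf_eq W W₁
    have hle : Module.finrank K ↥(W ⊔ W₁) ≤ d := by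
      rw [← hdim]; exact Submodule.finrank_le _
    have hpos : 0 < Module.finrank K ↥(W ⊓ W₁) := by
      have := i.isLt; omega
    obtain ⟨x, hx⟩ := Module.finrank_pos_iff_exists_ne_zero.1 hpos
    set w : V := (x : V) with hwdef
    have hw0 : w ≠ 0 := fun h => hx (Subtype.ext h)
    have hwW : w ∈ W := (Submodule.mem_inf.1 x.2).1
    have hwW₁ : w ∈ W₁ := (Submodule.mem_inf.1 x.2).2
    obtain ⟨k, hk0, hk⟩ := hhigh w hw0
    have hsupp : (↑(b.repr w).support : Set (Fin d)) ⊆ Set.Ici i :=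
      b.mem_span_image.1 hwW₁
    have hik : i ≤ k := hsupp (Finsupp.mem_support_iff.2 hk0)
    have hki := hord i k hik
    refine le_trans (csInf_le (hbdd W) ⟨w, hwW, hw0, rfl⟩) ?_
    simp only [hr] at hk ⊢
    linarith
  refine le_antisymm (csSup_le ⟨r i, hmem⟩ hub) (le_csSup ⟨r i, hub⟩ hmem)
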